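/- arXiv:2304.11451 — 2 statements merged into one kernel-verified Lean document; each statement's English description precedes it below -/
import Mathlib

section
/- Let P be a Sylow p-subgroup of a finite group G. If P satisfies the partial Π-property in G, then G is p-soluble. -/
open Subgroup

/-- `L/K` is a chief factor of `G`. -/
def IsChiefFactor (G : Type*) [Group G] (K L : Subgroup G) : Prop :=
  K.Normal ∧ L.Normal ∧ K < L ∧
    ∀ N : Subgroup G, N.Normal → K ≤ N → N ≤ L → N = K ∨ N = L

/-- `σ` is a chief series of `G`. -/
def IsChiefSeries {G : Type*} [Group G] {n : ℕ} (σ : Fin (n + 1) → Subgroup G) : Prop :=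
  σ 0 = ⊥ ∧ σ (Fin.last n) = ⊤ ∧
    ∀ i : Fin n, IsChiefFactor G (σ i.castSucc) (σ i.succ)

/-- `H` satisfies the partial Π-property in `G`: there is a chief series of `G` such that for
each chief factor `Gᵢ/Gᵢ₋₁`, the index `|G/Gᵢ₋₁ : N_{G/Gᵢ₋₁}(HGᵢ₋₁/Gᵢ₋₁ ∩ Gᵢ/Gᵢ₋₁)|`
(which equals `|G : N_G(HGᵢ₋₁ ∩ Gᵢ)|`) is a `π(HGᵢ₋₁/Gᵢ₋₁ ∩ Gᵢ/Gᵢ₋₁)`-number. -/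
def PartialPiProperty {G : Type*} [Group G] (H : Subgroup G) : Prop :=
  ∃ (n : ℕ) (σ : Fin (n + 1) → Subgroup G), IsChiefSeries σ ∧
    ∀ i : Fin n, ∀ q : ℕ, q.Prime →
      q ∣ (normalizer (((H ⊔ σ i.castSucc) ⊓ σ i.succ : Subgroup G) : Set G)).index →
      q ∣ (σ i.castSucc).relIndex ((H ⊔ σ i.castSucc) ⊓ σ i.succ)

/-- `G` is `p`-soluble: every chief factor is a `p`-group or a `p'`-group. -/
def IsPSoluble (p : ℕ) (G : Type*) [Group G] : Prop :=
  ∀ K L : Subgroup G, IsChiefFactor G K L →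
    (∃ k : ℕ, K.relIndex L = p ^ k) ∨ ¬ p ∣ K.relIndex L

/-- `G` has `p`-length at most one: there is a normal series `1 ≤ N ≤ M ≤ G` with `N` a
`p'`-group, `M/N` a `p`-group and `G/M` a `p'`-group. -/
def PLengthLEOne (p : ℕ) (G : Type*) [Group G] : Prop :=
  ∃ N M : Subgroup G, N.Normal ∧ M.Normal ∧ N ≤ M ∧
    ¬ p ∣ Nat.card N ∧ (∃ k : ℕ, N.relIndex M = p ^ k) ∧ ¬ p ∣ M.index

private lemma relIndex_dvd_index_of_normal_right {G : Type*} [Group G] [Finite G]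
    (N L : Subgroup G) [L.Normal] : N.relIndex L ∣ N.index := by
  have hX : L.relIndex N ≠ 0 := Subgroup.index_ne_zero_of_finite
  have h2 := relIndex_mul_relIndex (N ⊓ L) L (N ⊔ L) inf_le_right le_sup_right
  have h3 := relIndex_mul_relIndex (N ⊓ L) N (N ⊔ L) inf_le_left le_sup_left
  rw [inf_relIndex_right, relIndex_sup_right] at h2
  rw [inf_relIndex_left] at h3
  have h4 : N.relIndex L * L.relIndex N = L.relIndex N * N.relIndex (N ⊔ L) := h2.trans h3.symm
  rw [mul_comm (N.relIndex L)] at h4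
  have key : N.relIndex L = N.relIndex (N ⊔ L) :=
    Nat.eq_of_mul_eq_mul_left (Nat.pos_of_ne_zero hX) h4
  exact key ▸ relIndex_dvd_index_of_le le_sup_left

private lemma prime_pow_of_all_primes {p n : ℕ} (hn : n ≠ 0)
    (h : ∀ q : ℕ, q.Prime → q ∣ n → q = p) : ∃ k, n = p ^ k :=
  ⟨_, Nat.eq_prime_pow_of_unique_prime_dvd hn fun hq hd => h _ hq hd⟩

private lemma stepA {p : ℕ} (hp : p.Prime) {G : Type*} [Group G] [Finite G]
    (P : Sylow p G) (K L : Subgroup G) (hKN : K.Normal) (hLN : L.Normal) (hKL : K ≤ L)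
    (hmin : ∀ N : Subgroup G, N.Normal → K ≤ N → N ≤ L → N = K ∨ N = L)
    (hyp : ∀ q : ℕ, q.Prime → q ∣ (normalizer ((((P : Subgroup G) ⊔ K) ⊓ L : Subgroup G) : Set G)).index →
      q ∣ K.relIndex (((P : Subgroup G) ⊔ K) ⊓ L)) :
    (∃ k : ℕ, K.relIndex L = p ^ k) ∨ ¬ p ∣ K.relIndex L := by
  haveI : Fact p.Prime := ⟨hp⟩
  haveI := hKN; haveI := hLN
  by_cases hdvd : p ∣ K.relIndex L
  swap
  · exact Or.inr hdvd
  left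
  set f := QuotientGroup.mk' K with hf
  have hfsurj : Function.Surjective f := QuotientGroup.mk'_surjective K
  set L' : Subgroup (G ⧸ K) := L.map f with hL'
  haveI hL'N : L'.Normal := hLN.map f hfsurj
  set P' : Sylow p (G ⧸ K) := P.mapSurjective hfsurj with hP'
  have hP'c : (P' : Subgroup (G ⧸ K)) = (P : Subgroup G).map f := rfl
  set W : Subgroup (G ⧸ K) := (P' : Subgroup (G ⧸ K)) ⊓ L' with hW
  have hker : f.ker = K := QuotientGroup.ker_mk' K
  have hcomap : ((P : Subgroup G) ⊔ K) ⊓ L = W.comap f := by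
    rw [hW, comap_inf, hP'c, comap_map_eq, hL', comap_map_eq, hker, sup_of_le_left hKL]
  have hmapW : (W.comap f).map f = W := map_comap_eq_self_of_surjective hfsurj W
  have hWL : W ≤ L' := inf_le_right
  have hWp : IsPGroup p W := P'.2.to_le inf_le_left
  obtain ⟨a, ha⟩ := hWp.exists_card_eq
  have hrelW : K.relIndex (((P : Subgroup G) ⊔ K) ⊓ L) = Nat.card W := by
    have h := Subgroup.relIndex_ker (K := W.comap f) f
    rw [hker, hmapW] at h
    rw [hcomap, h]
  -- the normalizer of W has p-power index
  have hidx : (normalizer ((((P : Subgroup G) ⊔ K) ⊓ L : Subgroup G) : Set G)).index = (normalizer (W : Set (G ⧸ K))).index := by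
    rw [hcomap, ← comap_normalizer_eq_of_surjective _ hfsurj,
      (normalizer (W : Set (G ⧸ K))).index_comap_of_surjective hfsurj]
  obtain ⟨b, hb⟩ : ∃ b, (normalizer (W : Set (G ⧸ K))).index = p ^ b := by
    rw [← hidx]
    refine prime_pow_of_all_primes Subgroup.index_ne_zero_of_finite fun q hq hqd => ?_
    have := hyp q hq hqd
    rw [hrelW, ha] at this
    exact (Nat.prime_dvd_prime_iff_eq hq hp).mp (hq.dvd_of_dvd_pow this)
  -- W as a Sylow subgroup of L'
  set W' : Subgroup L' := W.subgroupOf L' with hW'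
  have hcW' : Nat.card W' = Nat.card W := Nat.card_congr (subgroupOfEquivOfLe hWL).toEquiv
  have hW'p : IsPGroup p W' := hWp.comap_of_injective _ L'.subtype_injective
  have hW'index : ¬ p ∣ W'.index := by
    intro hpd
    have h1 : W'.index = (P' : Subgroup (G ⧸ K)).relIndex L' := by
      rw [hW', relIndex]
      congr 1
      rw [hW, inf_subgroupOf_right]
    haveI : (P' : Subgroup (G ⧸ K)).FiniteIndex := ⟨Subgroup.index_ne_zero_of_finite⟩
    exact P'.not_dvd_index
      (hpd.trans ((h1 ▸ relIndex_dvd_index_of_normal_right (P' : Subgroup (G ⧸ K)) L') ))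
  set Syl : Sylow p L' := hW'p.toSylow hW'index with hSyl
  have hSylc : (Syl : Subgroup L') = W' := IsPGroup.toSylow_coe _ _
  -- there is a unique Sylow p-subgroup of L'
  have hcard_dvd : Nat.card (Sylow p L') ∣ p ^ b := by
    rw [Syl.card_eq_index_normalizer]
    have hle : (normalizer (W : Set (G ⧸ K))).subgroupOf L' ≤ normalizer ((Syl : Subgroup L') : Set L') := by
      rw [hSylc]
      intro x hx
      rw [mem_subgroupOf, mem_normalizer_iff] at hx
      rw [mem_normalizer_iff]
      intro h
      rw [hW', mem_subgroupOf, mem_subgroupOf]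
      simpa using hx ↑h
    refine (index_dvd_of_le hle).trans ?_
    have : ((normalizer (W : Set (G ⧸ K))).subgroupOf L').index = (normalizer (W : Set (G ⧸ K))).relIndex L' := rfl
    rw [this, ← hb]
    exact relIndex_dvd_index_of_normal_right _ _
  have hone : Nat.card (Sylow p L') = 1 := by
    obtain ⟨c, hcb, hc⟩ := (Nat.dvd_prime_pow hp).mp hcard_dvd
    rcases Nat.eq_zero_or_pos c with rfl | hcpos
    · simpa using hc
    · exact absurd (hc ▸ dvd_pow_self p hcpos.ne') (not_dvd_card_sylow p L')
  haveI hsub : Subsingleton (Sylow p L') := (Nat.card_eq_one_iff_unique.mp hone).1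
  -- W is normal in G ⧸ K
  have hWnormal : W.Normal := by
    refine ⟨fun w hw g => ?_⟩
    set Wg : Subgroup (G ⧸ K) := W.map (MulAut.conj g).toMonoidHom with hWg
    have hWgL : Wg ≤ L' := by
      rintro _ ⟨x, hx, rfl⟩
      simpa using hL'N.conj_mem x (hWL hx) g
    have hWgp : IsPGroup p Wg := hWp.map _
    have hWgcard : Nat.card Wg = Nat.card W :=
      (Nat.card_congr (equivMapOfInjective W _ (MulAut.conj g).injective).toEquiv).symm
    have hWg'p : IsPGroup p (Wg.subgroupOf L') := hWgp.comap_of_injective _ L'.subtype_injective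
    obtain ⟨Q, hQ⟩ := hWg'p.exists_le_sylow
    have hQS : Q = Syl := Subsingleton.elim _ _
    rw [hQS, hSylc] at hQ
    have hcWg' : Nat.card (Wg.subgroupOf L') = Nat.card Wg :=
      Nat.card_congr (subgroupOfEquivOfLe hWgL).toEquiv
    have heq : Wg.subgroupOf L' = W.subgroupOf L' := by
      rw [← hW']
      exact eq_of_le_of_card_ge hQ (by rw [hcW', hcWg', hWgcard])
    have hWgW : Wg = W := by
      have h1 := congrArg (fun S : Subgroup L' => S.map L'.subtype) heq
      simp only [subgroupOf_map_subtype] at h1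
      rwa [inf_of_le_left hWgL, inf_of_le_left hWL] at h1
    rw [← hWgW]
    exact ⟨w, hw, by simp⟩
  have hHnormal : (((P : Subgroup G) ⊔ K) ⊓ L).Normal := by
    rw [hcomap]; exact hWnormal.comap f
  have hKle : K ≤ ((P : Subgroup G) ⊔ K) ⊓ L := le_inf le_sup_right hKL
  rcases hmin _ hHnormal hKle inf_le_right with hKc | hLc
  · exfalso
    have hWbot : W = ⊥ := by
      rw [← hmapW, ← hcomap, hKc, hf]
      exact QuotientGroup.map_mk'_self (N := K)
    have hcardL' : K.relIndex L = Nat.card L' := by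
      have h := Subgroup.relIndex_ker (K := L) f
      rw [hker, ← hL'] at h
      exact h
    have hpL' : p ∣ Nat.card L' := hcardL' ▸ hdvd
    have hmul : Nat.card W' * W'.index = Nat.card L' := W'.card_mul_index
    rcases (Nat.Prime.dvd_mul hp).mp (hmul ▸ hpL') with h | h
    · rw [hcW', hWbot] at h
      simp at h
      exact hp.ne_one h
    · exact hW'index h
  · have hWL' : W = L' := by
      rw [← hmapW, ← hcomap, hLc, ← hL']
    refine ⟨a, ?_⟩
    have h := Subgroup.relIndex_ker (K := L) f
    rw [hker, ← hL', ← hWL'] at h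
    exact h.trans ha

theorem stmt2 {p : ℕ} (hp : p.Prime) {G : Type*} [Group G] [Finite G]
    (P : Sylow p G) (h : PartialPiProperty (P : Subgroup G)) :
    IsPSoluble p G := by
  obtain ⟨n, σ, ⟨h0, hlast, hchief⟩, hhyp⟩ := h
  intro K L hCF
  obtain ⟨hKN, hLN, hKlt, hmin⟩ := hCF
  haveI := hKN; haveI := hLN
  have hKL : K ≤ L := hKlt.le
  have hne : K ≠ L := hKlt.ne
  have hσN : ∀ j, (σ j).Normal := by
    intro j
    rcases Fin.eq_zero_or_eq_succ j with rfl | ⟨i, rfl⟩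
    · rw [h0]; infer_instance
    · exact (hchief i).2.1
  set T : Fin (n + 1) → Subgroup G := fun j => (σ j ⊓ L) ⊔ K with hT
  have hTKL : ∀ j, T j = K ∨ T j = L := by
    intro j
    haveI := hσN j
    exact hmin _ inferInstance le_sup_right (sup_le inf_le_right hKL)
  have hT0 : T 0 = K := by simp [hT, h0]
  have hTlast : T (Fin.last n) = L := by
    simp [hT, hlast, sup_eq_left.mpr hKL]
  have hjump : ∃ i : Fin n, T i.castSucc = K ∧ T i.succ = L := by
    by_contra hcon
    push_neg at hcon
    have hall : ∀ j, T j = K := by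
      intro j
      induction j using Fin.induction with
      | zero => exact hT0
      | succ i ih =>
        rcases hTKL i.succ with hh | hh
        · exact hh
        · exact absurd hh (hcon i ih)
    exact hne ((hall (Fin.last n)).symm.trans hTlast)
  obtain ⟨i, hiK, hiL⟩ := hjump
  obtain ⟨hAN, hBN, hABlt, hm⟩ := hchief i
  haveI := hAN; haveI := hBN
  set A := σ i.castSucc with hA
  set B := σ i.succ with hB
  have hfac : (∃ k, A.relIndex B = p ^ k) ∨ ¬ p ∣ A.relIndex B :=
    stepA hp P _ _ hAN hBN hABlt.le hm (hhyp i)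
  have hdvd : K.relIndex L ∣ A.relIndex B := by
    have hstep1 : K.relIndex L = K.relIndex (B ⊓ L) := by
      conv_lhs => rw [← hiL]
      exact relIndex_sup_right _ _
    have hsub : A ⊓ (B ⊓ L) ≤ K ⊓ (B ⊓ L) := by
      refine le_inf ?_ inf_le_right
      calc A ⊓ (B ⊓ L) ≤ A ⊓ L := le_inf inf_le_left (inf_le_right.trans inf_le_right)
      _ ≤ (σ i.castSucc ⊓ L) ⊔ K := le_sup_left
      _ = K := hiK
    have h4 : K.relIndex (B ⊓ L) ∣ A.relIndex (B ⊓ L) := by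
      rw [← inf_relIndex_right K (B ⊓ L), ← inf_relIndex_right A (B ⊓ L)]
      exact Dvd.intro_left _ (relIndex_mul_relIndex _ _ _ hsub inf_le_right)
    have h5 : A.relIndex (B ⊓ L) ∣ A.relIndex B := by
      have e1 := Subgroup.relIndex_ker (K := B ⊓ L) (QuotientGroup.mk' A)
      have e2 := Subgroup.relIndex_ker (K := B) (QuotientGroup.mk' A)
      rw [QuotientGroup.ker_mk'] at e1 e2
      rw [e1, e2]
      exact card_dvd_of_le (map_mono inf_le_left)
    calc K.relIndex L = K.relIndex (B ⊓ L) := hstep1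
    _ ∣ A.relIndex (B ⊓ L) := h4
    _ ∣ A.relIndex B := h5
  rcases hfac with ⟨k, hk⟩ | hnd
  · left
    obtain ⟨j, _, hj⟩ := (Nat.dvd_prime_pow hp).mp (hk ▸ hdvd)
    exact ⟨j, hj⟩
  · right
    exact fun hpd => hnd (hpd.trans hdvd)
end

section
/- Let H be a subgroup of a finite group G and N a normal subgroup of G such that either N ≤ H, or gcd(|H|, |N|) = 1. If H satisfies the partial Π-property in G, then HN/N satisfies the partial Π-property in G/N. -/
open Subgroup
open scoped Pointwise

/-- Auxiliary: a single step of a "weak" chief series witnessing the partial Π-property: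
either a trivial step or a chief factor satisfying the index condition. -/
def AuxOK {Q : Type*} [Group Q] (Hb K L : Subgroup Q) : Prop :=
  L = K ∨ (IsChiefFactor Q K L ∧ ∀ q : ℕ, q.Prime →
      q ∣ (normalizer (((Hb ⊔ K) ⊓ L : Subgroup Q) : Set Q)).index → q ∣ K.relIndex ((Hb ⊔ K) ⊓ L))

theorem auxSeries_partialPi {Q : Type*} [Group Q] (Hb : Subgroup Q) :
    ∀ (n : ℕ) (τ : ℕ → Subgroup Q), τ 0 = ⊥ → τ n = ⊤ →
      (∀ i, i < n → AuxOK Hb (τ i) (τ (i + 1))) → PartialPiProperty Hb := by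
  intro n
  induction n with
  | zero =>
    intro τ h0 h1 _
    exact ⟨0, fun _ => ⊥, ⟨rfl, h0 ▸ h1, fun i => i.elim0⟩, fun i => i.elim0⟩
  | succ n ih =>
    intro τ h0 h1 hs
    by_cases hex : ∃ j, j < n + 1 ∧ τ (j + 1) = τ j
    · obtain ⟨j, hj, heq⟩ := hex
      refine ih (fun i => if i ≤ j then τ i else τ (i + 1)) ?_ ?_ ?_
      · simp only [Nat.zero_le, if_pos]
        exact h0
      · by_cases hn : n ≤ j
        · have hjn : j = n := le_antisymm (by omega) hn
          subst hjn
          simp only [if_pos hn]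
          rw [← heq]
          exact h1
        · simp only [if_neg hn]
          exact h1
      · intro i hi
        rcases lt_trichotomy i j with hij | hij | hij
        · simp only [if_pos hij.le, if_pos (Nat.succ_le_of_lt hij)]
          exact hs i (by omega)
        · subst hij
          have e2 : ¬ (i + 1 ≤ i) := by omega
          simp only [if_pos (le_refl i), if_neg e2]
          rw [← heq]
          exact hs (i + 1) (by omega)
        · have e1 : ¬ (i ≤ j) := by omega
          have e2 : ¬ (i + 1 ≤ j) := by omega
          simp only [if_neg e1, if_neg e2]
          exact hs (i + 1) (by omega)
    · push_neg at hex
      refine ⟨n + 1, fun i => τ i.val, ⟨?_, ?_, ?_⟩, ?_⟩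
      · simpa using h0
      · simpa using h1
      · intro i
        rcases hs i.val i.isLt with he | ⟨hc, _⟩
        · exact absurd he (hex i.val i.isLt)
        · exact hc
      · intro i q hq hd
        rcases hs i.val i.isLt with he | ⟨_, hcnd⟩
        · exact absurd he (hex i.val i.isLt)
        · exact hcnd q hq hd

theorem map_mk'_self' {G : Type*} [Group G] (N : Subgroup G) [N.Normal] :
    N.map (QuotientGroup.mk' N) = ⊥ := by
  rw [Subgroup.map_eq_bot_iff, QuotientGroup.ker_mk']

/-- The image of a chief factor in a quotient is a chief factor, provided it does not
collapse. -/
theorem chief_map {G : Type*} [Group G] (N K L : Subgroup G) [N.Normal]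
    (hcf : IsChiefFactor G K L) (hnt : ¬ L ≤ K ⊔ N) :
    IsChiefFactor (G ⧸ N) (K.map (QuotientGroup.mk' N)) (L.map (QuotientGroup.mk' N)) := by
  obtain ⟨hKn, hLn, hKL, hmax⟩ := hcf
  haveI := hKn; haveI := hLn
  have hφ : Function.Surjective (QuotientGroup.mk' N) := QuotientGroup.mk'_surjective N
  refine ⟨hKn.map _ hφ, hLn.map _ hφ, ?_, ?_⟩
  · refine lt_of_le_of_ne (Subgroup.map_mono hKL.le) ?_
    intro he
    apply hnt
    calc L ≤ Subgroup.comap (QuotientGroup.mk' N) (L.map (QuotientGroup.mk' N)) :=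
            Subgroup.le_comap_map _ L
    _ = Subgroup.comap (QuotientGroup.mk' N) (K.map (QuotientGroup.mk' N)) := by rw [he]
    _ = K ⊔ N := by rw [Subgroup.comap_map_eq, QuotientGroup.ker_mk']
  · intro M hM hKM hML
    haveI hM'n : (Subgroup.comap (QuotientGroup.mk' N) M).Normal := hM.comap _
    have hNM' : N ≤ Subgroup.comap (QuotientGroup.mk' N) M := by
      intro x hx
      have hx1 : QuotientGroup.mk' N x = 1 := by
        have : x ∈ (QuotientGroup.mk' N).ker := by
          rw [QuotientGroup.ker_mk']; exact hx
        exact this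
      show QuotientGroup.mk' N x ∈ M
      rw [hx1]; exact M.one_mem
    have hKM' : K ≤ Subgroup.comap (QuotientGroup.mk' N) M :=
      le_trans (Subgroup.le_comap_map _ K) (Subgroup.comap_mono hKM)
    have hM'eq : Subgroup.comap (QuotientGroup.mk' N) M =
        (Subgroup.comap (QuotientGroup.mk' N) M ⊓ L) ⊔ N := by
      apply le_antisymm
      · intro x hx
        have hxLN : x ∈ L ⊔ N := by
          have h2 := Subgroup.comap_mono hML hx
          rwa [Subgroup.comap_map_eq, QuotientGroup.ker_mk'] at h2
        have hxm : (x : G) ∈ ((L : Set G) * (N : Set G)) := by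
          rw [← Subgroup.mul_normal]; exact hxLN
        obtain ⟨l, hl, m, hm, rfl⟩ := hxm
        have hlM' : l ∈ Subgroup.comap (QuotientGroup.mk' N) M := by
          have h3 : l * m * m⁻¹ ∈ Subgroup.comap (QuotientGroup.mk' N) M :=
            mul_mem hx (inv_mem (hNM' hm))
          have e : l * m * m⁻¹ = l := by group
          rwa [e] at h3
        exact mul_mem (Subgroup.mem_sup_left (Subgroup.mem_inf.mpr ⟨hlM', hl⟩))
          (Subgroup.mem_sup_right hm)
      · exact sup_le inf_le_left hNM'
    have hMM : M = (Subgroup.comap (QuotientGroup.mk' N) M).map (QuotientGroup.mk' N) :=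
      (Subgroup.map_comap_eq_self_of_surjective hφ M).symm
    rcases hmax (Subgroup.comap (QuotientGroup.mk' N) M ⊓ L) inferInstance
        (le_inf hKM' hKL.le) inf_le_right with hK | hL
    · left
      rw [hMM, hM'eq, hK, Subgroup.map_sup, map_mk'_self', sup_bot_eq]
    · right
      rw [hMM, hM'eq, hL, Subgroup.map_sup, map_mk'_self', sup_bot_eq]

theorem coprime_inf_le {G : Type*} [Group G] [Finite G] (H N L : Subgroup G)
    [N.Normal] [L.Normal] (hco : Nat.Coprime (Nat.card H) (Nat.card N)) :
    H ⊓ (L ⊔ N) ≤ L := by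
  have hd0 : (L.subgroupOf (H ⊓ (L ⊔ N))).index ∣ Nat.card (H ⊓ (L ⊔ N) : Subgroup G) :=
    Subgroup.index_dvd_card (L.subgroupOf (H ⊓ (L ⊔ N)))
  have hd1 : L.relIndex (H ⊓ (L ⊔ N)) ∣ Nat.card H :=
    dvd_trans hd0 (Subgroup.card_dvd_of_le inf_le_left)
  have hd2 : L.relIndex (H ⊓ (L ⊔ N)) ∣ Nat.card N := by
    have e1 : L.relIndex (L ⊔ (H ⊓ (L ⊔ N))) = L.relIndex (H ⊓ (L ⊔ N)) :=
      Subgroup.relIndex_sup_left _ _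
    have e2 : L.relIndex (L ⊔ (H ⊓ (L ⊔ N))) ∣ L.relIndex (L ⊔ N) :=
      ⟨(L ⊔ (H ⊓ (L ⊔ N))).relIndex (L ⊔ N),
        (Subgroup.relIndex_mul_relIndex L (L ⊔ (H ⊓ (L ⊔ N))) (L ⊔ N) le_sup_left
          (sup_le le_sup_left inf_le_right)).symm⟩
    have e3 : L.relIndex (L ⊔ N) = L.relIndex N := Subgroup.relIndex_sup_left _ _
    have e4 : L.relIndex N ∣ Nat.card N := Subgroup.index_dvd_card (L.subgroupOf N)
    calc L.relIndex (H ⊓ (L ⊔ N)) = L.relIndex (L ⊔ (H ⊓ (L ⊔ N))) := e1.symm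
    _ ∣ L.relIndex (L ⊔ N) := e2
    _ = L.relIndex N := e3
    _ ∣ Nat.card N := e4
  have hone : L.relIndex (H ⊓ (L ⊔ N)) = 1 :=
    Nat.dvd_one.mp (hco ▸ Nat.dvd_gcd hd1 hd2)
  have htop : L.subgroupOf (H ⊓ (L ⊔ N)) = ⊤ := Subgroup.index_eq_one.mp hone
  exact Subgroup.subgroupOf_eq_top.mp htop

theorem inf_sup_le_aux {G : Type*} [Group G] [Finite G] (H N K L : Subgroup G)
    [N.Normal] [L.Normal] (hKL : K ≤ L)
    (hcond : N ≤ H ∨ Nat.Coprime (Nat.card H) (Nat.card N)) :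
    H ⊓ (L ⊔ N) ≤ ((H ⊔ K) ⊓ L) ⊔ N := by
  rcases hcond with hle | hco
  · intro x hx
    obtain ⟨hxH, hxLN⟩ := Subgroup.mem_inf.mp hx
    have hxm : (x : G) ∈ ((L : Set G) * (N : Set G)) := by
      rw [← Subgroup.mul_normal]; exact hxLN
    obtain ⟨l, hl, m, hm, rfl⟩ := hxm
    have hlH : l ∈ H := by
      have h3 : l * m * m⁻¹ ∈ H := mul_mem hxH (inv_mem (hle hm))
      have e : l * m * m⁻¹ = l := by group
      rwa [e] at h3
    exact mul_mem
      (Subgroup.mem_sup_left (Subgroup.mem_inf.mpr ⟨Subgroup.mem_sup_left hlH, hl⟩))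
      (Subgroup.mem_sup_right hm)
  · refine le_trans (le_inf ?_ ?_) le_sup_left
    · exact le_trans inf_le_left le_sup_left
    · exact coprime_inf_le H N L hco

theorem W_eq {G : Type*} [Group G] (H N K L : Subgroup G) [N.Normal] [K.Normal]
    (hKL : K ≤ L) (hHL : H ⊓ (L ⊔ N) ≤ ((H ⊔ K) ⊓ L) ⊔ N) :
    (H ⊔ K ⊔ N) ⊓ (L ⊔ N) = ((H ⊔ K) ⊓ L) ⊔ N := by
  apply le_antisymm
  · intro x hx
    obtain ⟨hx1, hx2⟩ := Subgroup.mem_inf.mp hx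
    rw [sup_assoc] at hx1
    have hxm : (x : G) ∈ ((H : Set G) * ((K ⊔ N : Subgroup G) : Set G)) := by
      rw [← Subgroup.mul_normal]; exact hx1
    obtain ⟨h, hh, w, hw, rfl⟩ := hxm
    have hwm : (w : G) ∈ ((K : Set G) * (N : Set G)) := by
      rw [← Subgroup.mul_normal]; exact hw
    obtain ⟨k, hk, m, hm, rfl⟩ := hwm
    have hhmem : h ∈ H ⊓ (L ⊔ N) := by
      refine Subgroup.mem_inf.mpr ⟨hh, ?_⟩
      have h2 : h * (k * m) * m⁻¹ * k⁻¹ ∈ L ⊔ N :=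
        mul_mem (mul_mem hx2 (Subgroup.mem_sup_right (inv_mem hm)))
          (Subgroup.mem_sup_left (hKL (inv_mem hk)))
      have e : h * (k * m) * m⁻¹ * k⁻¹ = h := by group
      rwa [e] at h2
    refine mul_mem (hHL hhmem) (mul_mem ?_ (Subgroup.mem_sup_right hm))
    exact Subgroup.mem_sup_left
      (Subgroup.mem_inf.mpr ⟨Subgroup.mem_sup_right hk, hKL hk⟩)
  · refine sup_le (le_inf ?_ ?_) (le_inf le_sup_right le_sup_right)
    · exact le_trans inf_le_left le_sup_left
    · exact le_trans inf_le_right le_sup_left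

theorem infKN {G : Type*} [Group G] (N K L X : Subgroup G) [N.Normal]
    (hcf : IsChiefFactor G K L) (hnt : ¬ L ≤ K ⊔ N) (hKX : K ≤ X) (hXL : X ≤ L) :
    (K ⊔ N) ⊓ X = K := by
  obtain ⟨hKn, hLn, hKL, hmax⟩ := hcf
  haveI := hKn; haveI := hLn
  have h1 : L ⊓ (K ⊔ N) = K := by
    rcases hmax (L ⊓ (K ⊔ N)) inferInstance (le_inf hKL.le le_sup_left) inf_le_left
      with hc | hc
    · exact hc
    · exact absurd (by rw [← hc]; exact inf_le_right : L ≤ K ⊔ N) hnt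
  apply le_antisymm
  · calc (K ⊔ N) ⊓ X ≤ (K ⊔ N) ⊓ L := inf_le_inf_left _ hXL
    _ = K := by rw [inf_comm]; exact h1
  · exact le_inf le_sup_left hKX

theorem stmt17 {G : Type*} [Group G] [Finite G]
    (H N : Subgroup G) [hN : N.Normal]
    (hcond : N ≤ H ∨ Nat.Coprime (Nat.card H) (Nat.card N))
    (h : PartialPiProperty H) :
    PartialPiProperty (H.map (QuotientGroup.mk' N)) := by
  obtain ⟨n, σ, ⟨hσ0, hσl, hσc⟩, hcnd⟩ := h
  have hφ : Function.Surjective (QuotientGroup.mk' N) := QuotientGroup.mk'_surjective N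
  refine auxSeries_partialPi (H.map (QuotientGroup.mk' N)) n
    (fun i => if hi : i < n + 1 then (σ ⟨i, hi⟩).map (QuotientGroup.mk' N) else ⊤) ?_ ?_ ?_
  · simp only [dif_pos (Nat.succ_pos n)]
    rw [show (⟨0, Nat.succ_pos n⟩ : Fin (n + 1)) = 0 from by ext; simp, hσ0,
      Subgroup.map_bot]
  · simp only [dif_pos (Nat.lt_succ_self n)]
    rw [show (⟨n, Nat.lt_succ_self n⟩ : Fin (n + 1)) = Fin.last n from by ext; simp, hσl,
      Subgroup.map_top_of_surjective _ hφ]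
  · intro i hi
    have hi1 : i < n + 1 := by omega
    have hi2 : i + 1 < n + 1 := by omega
    simp only [dif_pos hi1, dif_pos hi2]
    have ec : (⟨i, hi1⟩ : Fin (n + 1)) = (⟨i, hi⟩ : Fin n).castSucc := by ext; simp
    have es : (⟨i + 1, hi2⟩ : Fin (n + 1)) = (⟨i, hi⟩ : Fin n).succ := by ext; simp
    rw [ec, es]
    obtain ⟨hKn, hLn, hKL, hmax⟩ := hσc ⟨i, hi⟩
    haveI := hKn; haveI := hLn
    by_cases hnt : σ (⟨i, hi⟩ : Fin n).succ ≤ σ (⟨i, hi⟩ : Fin n).castSucc ⊔ N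
    · left
      apply le_antisymm
      · refine le_trans (Subgroup.map_mono hnt) ?_
        rw [Subgroup.map_sup, map_mk'_self', sup_bot_eq]
      · exact Subgroup.map_mono hKL.le
    · right
      set K := σ (⟨i, hi⟩ : Fin n).castSucc with hK
      set L := σ (⟨i, hi⟩ : Fin n).succ with hL
      refine ⟨chief_map N K L ⟨hKn, hLn, hKL, hmax⟩ hnt, ?_⟩
      intro q hq hdvd
      have hW : (H.map (QuotientGroup.mk' N) ⊔ K.map (QuotientGroup.mk' N)) ⊓
          L.map (QuotientGroup.mk' N) = ((H ⊔ K) ⊓ L).map (QuotientGroup.mk' N) := by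
        rw [← Subgroup.map_sup]
        have h1 : (H ⊔ K).map (QuotientGroup.mk' N) ⊓ L.map (QuotientGroup.mk' N) =
            (Subgroup.comap (QuotientGroup.mk' N) ((H ⊔ K).map (QuotientGroup.mk' N)) ⊓
              Subgroup.comap (QuotientGroup.mk' N) (L.map (QuotientGroup.mk' N))).map
              (QuotientGroup.mk' N) := by
          rw [← Subgroup.comap_inf, Subgroup.map_comap_eq_self_of_surjective hφ]
        rw [h1, Subgroup.comap_map_eq, Subgroup.comap_map_eq, QuotientGroup.ker_mk',
          W_eq H N K L hKL.le (inf_sup_le_aux H N K L hKL.le hcond),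
          Subgroup.map_sup, map_mk'_self', sup_bot_eq]
      rw [hW] at hdvd ⊢
      have hb : (normalizer ((((H ⊔ K) ⊓ L).map (QuotientGroup.mk' N) : Subgroup (G ⧸ N)) : Set (G ⧸ N))).index ∣
          (normalizer (((H ⊔ K) ⊓ L : Subgroup G) : Set G)).index :=
        dvd_trans (Subgroup.index_dvd_of_le (Subgroup.le_normalizer_map _))
          (by first | exact Subgroup.index_map_dvd hφ | exact Subgroup.index_map_dvd _ hφ)
      have hq2 : q ∣ K.relIndex ((H ⊔ K) ⊓ L) := hcnd ⟨i, hi⟩ q hq (dvd_trans hdvd hb)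
      have hr : (K.map (QuotientGroup.mk' N)).relIndex
          (((H ⊔ K) ⊓ L).map (QuotientGroup.mk' N)) = K.relIndex ((H ⊔ K) ⊓ L) := by
        rw [← Subgroup.relIndex_comap, Subgroup.comap_map_eq, QuotientGroup.ker_mk',
          ← Subgroup.inf_relIndex_right,
          infKN N K L ((H ⊔ K) ⊓ L) ⟨hKn, hLn, hKL, hmax⟩ hnt
            (le_inf le_sup_right hKL.le) inf_le_right]
      rw [hr]
      exact hq2
end
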